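/- Let n ≥ 1, let V : ℝⁿ → ℝ be smooth with e^{−V} integrable and with e^{−V} and |∇V| e^{−V} bounded on ℝⁿ, and let φ : ℝ → ℝ be a C² convex function. Let h : [0,∞) × ℝⁿ → ℝ be a smooth solution of ∂h/∂t = Δh − ∇V·∇h such that, on each compact time interval, h(t,·) and its spatial derivatives up to second order decay faster than any power of |x|, uniformly in t. Then for all t > 0, d/dt ∫_{ℝⁿ} φ(h(t,x)) e^{−V(x)} dx = −∫_{ℝⁿ} φ''(h(t,x)) |∇h(t,x)|² e^{−V(x)} dx ≤ 0; in particular t ↦ ∫ φ(h(t,·)) e^{−V} dx is a Lyapunov functional. -/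

import Mathlib

open MeasureTheory Real

/-- Partial derivative in the `i`-th coordinate direction. -/
noncomputable def pd {n : ℕ} (i : Fin n) (f : EuclideanSpace ℝ (Fin n) → ℝ)
    (x : EuclideanSpace ℝ (Fin n)) : ℝ :=
  fderiv ℝ f x (EuclideanSpace.single i 1)

/-- The Laplacian as the sum of the second partial derivatives. -/
noncomputable def lap {n : ℕ} (f : EuclideanSpace ℝ (Fin n) → ℝ)
    (x : EuclideanSpace ℝ (Fin n)) : ℝ :=
  ∑ i, pd i (pd i f) x

lemma pd_contDiff {n : ℕ} {f : EuclideanSpace ℝ (Fin n) → ℝ} (i : Fin n)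
    (hf : ContDiff ℝ (⊤ : ℕ∞) f) : ContDiff ℝ (⊤ : ℕ∞) (pd i f) :=
  (hf.fderiv_right (le_refl _)).clm_apply contDiff_const

lemma slice_contDiff {n : ℕ} {h : ℝ → EuclideanSpace ℝ (Fin n) → ℝ}
    (hsmooth : ContDiffOn ℝ (⊤ : ℕ∞) (fun p : ℝ × EuclideanSpace ℝ (Fin n) => h p.1 p.2)
      {p : ℝ × EuclideanSpace ℝ (Fin n) | 0 ≤ p.1})
    {t : ℝ} (ht : 0 ≤ t) : ContDiff ℝ (⊤ : ℕ∞) (h t) := by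
  rw [← contDiffOn_univ]
  have : ContDiffOn ℝ (⊤ : ℕ∞)
      ((fun p : ℝ × EuclideanSpace ℝ (Fin n) => h p.1 p.2) ∘
        (fun x : EuclideanSpace ℝ (Fin n) => (t, x))) Set.univ :=
    hsmooth.comp ((contDiff_const.prodMk contDiff_id).contDiffOn) (fun x _ => ht)
  exact this

lemma japanese {n : ℕ} :
    Integrable (fun x : EuclideanSpace ℝ (Fin n) => 1 / (1 + ‖x‖) ^ (n + 1)) := by
  have h := integrable_one_add_norm (E := EuclideanSpace ℝ (Fin n)) (μ := volume) (r := n + 1)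
    (by norm_num [finrank_euclideanSpace_fin])
  refine h.congr (Filter.Eventually.of_forall fun x => ?_)
  have h0 : (0:ℝ) < 1 + ‖x‖ := by positivity
  show (1 + ‖x‖) ^ (-((n:ℝ) + 1)) = 1 / (1 + ‖x‖) ^ (n + 1)
  rw [Real.rpow_neg h0.le, one_div, ← Real.rpow_natCast (1 + ‖x‖) (n+1)]
  push_cast
  ring_nf

lemma monotone_deriv_nonneg {g : ℝ → ℝ} (hg : Monotone g) (hd : DifferentiableAt ℝ g y) :
    0 ≤ deriv g y := by
  have h1 : Filter.Tendsto (slope g y) (nhdsWithin y (Set.Ioi y)) (nhds (deriv g y)) :=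
    (hasDerivAt_iff_tendsto_slope.mp hd.hasDerivAt).mono_left
      (nhdsWithin_mono _ (fun z hz => ne_of_gt hz))
  refine ge_of_tendsto h1 ?_
  filter_upwards [self_mem_nhdsWithin] with z hz
  rw [slope_def_field, div_eq_inv_mul]
  exact mul_nonneg (inv_nonneg.2 (sub_nonneg.2 (le_of_lt hz))) (sub_nonneg.2 (hg (le_of_lt hz)))

section slices
variable {n : ℕ} {h : ℝ → EuclideanSpace ℝ (Fin n) → ℝ}
  (hsmooth : ContDiffOn ℝ (⊤ : ℕ∞) (fun p : ℝ × EuclideanSpace ℝ (Fin n) => h p.1 p.2)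
      {p : ℝ × EuclideanSpace ℝ (Fin n) | 0 ≤ p.1})

include hsmooth in
lemma time_diffAt {s : ℝ} (hs : 0 < s) (x : EuclideanSpace ℝ (Fin n)) :
    DifferentiableAt ℝ (fun u => h u x) s := by
  have hopen : IsOpen {p : ℝ × EuclideanSpace ℝ (Fin n) | 0 < p.1} :=
    isOpen_lt continuous_const continuous_fst
  have hmem : {p : ℝ × EuclideanSpace ℝ (Fin n) | 0 ≤ p.1} ∈
      nhds ((s, x) : ℝ × EuclideanSpace ℝ (Fin n)) :=
    Filter.mem_of_superset (hopen.mem_nhds (by exact hs))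
      (fun p hp => (le_of_lt (by exact hp) : (0:ℝ) ≤ p.1))
  have hc : ContDiffAt ℝ (⊤ : ℕ∞) (fun p : ℝ × EuclideanSpace ℝ (Fin n) => h p.1 p.2) (s, x) :=
    hsmooth.contDiffAt hmem
  have : ContDiffAt ℝ (⊤ : ℕ∞) (fun u : ℝ => h u x) s := by
    have := hc.comp s ((contDiffAt_id.prodMk contDiffAt_const) :
      ContDiffAt ℝ (⊤ : ℕ∞) (fun u : ℝ => (u, x)) s)
    exact this
  exact this.differentiableAt (by simp)

include hsmooth in
lemma time_contWithin {t : ℝ} (ht : 0 ≤ t) (x : EuclideanSpace ℝ (Fin n)) :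
    ContinuousWithinAt (fun u => h u x) (Set.Ici 0) t := by
  have hc : ContinuousWithinAt (fun p : ℝ × EuclideanSpace ℝ (Fin n) => h p.1 p.2)
      {p : ℝ × EuclideanSpace ℝ (Fin n) | 0 ≤ p.1} (t, x) :=
    hsmooth.continuousOn _ (by exact ht)
  have hmap : Set.MapsTo (fun u : ℝ => (u, x)) (Set.Ici 0)
      {p : ℝ × EuclideanSpace ℝ (Fin n) | 0 ≤ p.1} := fun u hu => hu
  have hg : ContinuousWithinAt (fun u : ℝ => ((u, x) : ℝ × EuclideanSpace ℝ (Fin n)))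
      (Set.Ici 0) t := (continuous_id.prodMk continuous_const).continuousWithinAt
  have hcomp : ContinuousWithinAt
      ((fun p : ℝ × EuclideanSpace ℝ (Fin n) => h p.1 p.2) ∘ (fun u : ℝ => (u, x)))
      (Set.Ici 0) t := ContinuousWithinAt.comp hc hg hmap
  exact hcomp

end slices

section phi
variable {φ : ℝ → ℝ} (hφ : ContDiff ℝ 2 φ)

include hφ in
lemma phi_D1 : Differentiable ℝ φ := hφ.differentiable (by norm_num)

include hφ in
lemma phi_C1' : ContDiff ℝ 1 (deriv φ) := by
  have h2 : ContDiff ℝ ((1 : WithTop ℕ∞) + 1) φ := by exact_mod_cast hφ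
  rw [contDiff_succ_iff_deriv] at h2
  exact h2.2.2

include hφ in
lemma phi_D2 : Differentiable ℝ (deriv φ) := (phi_C1' hφ).differentiable one_ne_zero

include hφ in
lemma phi_C2 : Continuous (deriv (deriv φ)) :=
  (contDiff_one_iff_deriv.mp (phi_C1' hφ)).2

include hφ in
lemma phi_dd_nonneg (hφconv : ConvexOn ℝ Set.univ φ) (y : ℝ) :
    0 ≤ deriv (deriv φ) y := by
  have hmono : Monotone (deriv φ) := by
    have := hφconv.monotoneOn_deriv (fun x _ => (phi_D1 hφ) x)
    rwa [monotoneOn_univ] at this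
  exact monotone_deriv_nonneg hmono ((phi_D2 hφ) y)

end phi

lemma integrable_dom {n : ℕ} {V : EuclideanSpace ℝ (Fin n) → ℝ}
    (hVint : Integrable (fun x : EuclideanSpace ℝ (Fin n) => Real.exp (-V x)))
    (c₁ c₂ : ℝ) {g : EuclideanSpace ℝ (Fin n) → ℝ} (hg : Continuous g)
    (hb : ∀ x, |g x| ≤ c₁ * Real.exp (-V x) + c₂ * (1 / (1 + ‖x‖) ^ (n + 1))) :
    Integrable g := by
  have hbint : Integrable
      (fun x : EuclideanSpace ℝ (Fin n) =>
        c₁ * Real.exp (-V x) + c₂ * (1 / (1 + ‖x‖) ^ (n + 1))) :=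
    (hVint.const_mul c₁).add (japanese.const_mul c₂)
  exact hbint.mono' hg.aestronglyMeasurable
    (Filter.Eventually.of_forall fun x => by rw [Real.norm_eq_abs]; exact hb x)

lemma core {n : ℕ}
    {V : EuclideanSpace ℝ (Fin n) → ℝ} (hV : ContDiff ℝ (⊤ : ℕ∞) V)
    (hVint : Integrable (fun x : EuclideanSpace ℝ (Fin n) => Real.exp (-V x)))
    (hgradVbdd : ∃ C : ℝ, ∀ x, ‖fderiv ℝ V x‖ * Real.exp (-V x) ≤ C)
    {φ : ℝ → ℝ} (hφ : ContDiff ℝ 2 φ)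
    {h : ℝ → EuclideanSpace ℝ (Fin n) → ℝ}
    (hsmooth : ContDiffOn ℝ (⊤ : ℕ∞) (fun p : ℝ × EuclideanSpace ℝ (Fin n) => h p.1 p.2)
      {p : ℝ × EuclideanSpace ℝ (Fin n) | 0 ≤ p.1})
    (hdecay : ∀ b : ℝ, 0 ≤ b → ∀ k : ℕ, ∃ C : ℝ,
      ∀ t ∈ Set.Icc (0 : ℝ) b, ∀ x : EuclideanSpace ℝ (Fin n),
        |h t x| + (∑ i, |pd i (h t) x|) + (∑ i, ∑ j, |pd i (pd j (h t)) x|) ≤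
          C / (1 + ‖x‖) ^ k)
    (hpde : ∀ t : ℝ, 0 < t → ∀ x,
      deriv (fun s => h s x) t = lap (h t) x - ∑ i, pd i V x * pd i (h t) x)
    {t : ℝ} (ht : 0 < t) :
    HasDerivAt (fun s => ∫ x : EuclideanSpace ℝ (Fin n), φ (h s x) * Real.exp (-V x))
      (-∫ x : EuclideanSpace ℝ (Fin n),
        deriv (deriv φ) (h t x) * (∑ i, pd i (h t) x ^ 2) * Real.exp (-V x)) t := by
  obtain ⟨Cg, hCg⟩ := hgradVbdd
  have hCg0 : 0 ≤ Cg := le_trans (by positivity) (hCg 0)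
  obtain ⟨C₀, hC₀⟩ := hdecay (2 * t) (by positivity) 0
  obtain ⟨C₁, hC₁⟩ := hdecay (2 * t) (by positivity) (n + 1)
  have hC₀' : ∀ s ∈ Set.Icc (0:ℝ) (2*t), ∀ x,
      |h s x| + (∑ i, |pd i (h s) x|) + (∑ i, ∑ j, |pd i (pd j (h s)) x|) ≤ C₀ :=
    fun s hs x => by simpa using hC₀ s hs x
  have htmem : t ∈ Set.Icc (0:ℝ) (2*t) := ⟨ht.le, by linarith⟩
  have sum1_nonneg : ∀ s x, 0 ≤ ∑ i, |pd i (h s) x| :=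
    fun s x => Finset.sum_nonneg fun i _ => abs_nonneg _
  have sum2_nonneg : ∀ s x, 0 ≤ ∑ i, ∑ j, |pd i (pd j (h s)) x| :=
    fun s x => Finset.sum_nonneg fun i _ => Finset.sum_nonneg fun j _ => abs_nonneg _
  have habs_h : ∀ s ∈ Set.Icc (0:ℝ) (2*t), ∀ x, |h s x| ≤ C₀ := by
    intro s hs x
    have := hC₀' s hs x
    linarith [sum1_nonneg s x, sum2_nonneg s x]
  have habs_d1 : ∀ s ∈ Set.Icc (0:ℝ) (2*t), ∀ (i : Fin n) x, |pd i (h s) x| ≤ C₀ := by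
    intro s hs i x
    have h1 : |pd i (h s) x| ≤ ∑ j, |pd j (h s) x| :=
      Finset.single_le_sum (f := fun j => |pd j (h s) x|)
        (fun j _ => abs_nonneg _) (Finset.mem_univ i)
    have := hC₀' s hs x
    linarith [abs_nonneg (h s x), sum2_nonneg s x]
  have habs_d2 : ∀ s ∈ Set.Icc (0:ℝ) (2*t), ∀ (i j : Fin n) x,
      |pd i (pd j (h s)) x| ≤ C₀ := by
    intro s hs i j x
    have h1 : |pd i (pd j (h s)) x| ≤ ∑ j', |pd i (pd j' (h s)) x| :=
      Finset.single_le_sum (f := fun j' => |pd i (pd j' (h s)) x|)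
        (fun j' _ => abs_nonneg _) (Finset.mem_univ j)
    have h2 : (∑ j', |pd i (pd j' (h s)) x|) ≤ ∑ i', ∑ j', |pd i' (pd j' (h s)) x| :=
      Finset.single_le_sum (f := fun i' => ∑ j', |pd i' (pd j' (h s)) x|)
        (fun i' _ => Finset.sum_nonneg fun j' _ => abs_nonneg _) (Finset.mem_univ i)
    have := hC₀' s hs x
    linarith [abs_nonneg (h s x), sum1_nonneg s x]
  have hC₀0 : 0 ≤ C₀ := le_trans (abs_nonneg _) (habs_h t htmem 0)
  have habs_d1' : ∀ s ∈ Set.Icc (0:ℝ) (2*t), ∀ (i : Fin n) x,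
      |pd i (h s) x| ≤ C₁ * (1 / (1 + ‖x‖) ^ (n+1)) := by
    intro s hs i x
    have h1 : |pd i (h s) x| ≤ ∑ j, |pd j (h s) x| :=
      Finset.single_le_sum (f := fun j => |pd j (h s) x|)
        (fun j _ => abs_nonneg _) (Finset.mem_univ i)
    have h2 := hC₁ s hs x
    have h3 : C₁ / (1 + ‖x‖) ^ (n+1) = C₁ * (1 / (1 + ‖x‖) ^ (n+1)) := by ring
    rw [h3] at h2
    linarith [abs_nonneg (h s x), sum2_nonneg s x]
  have hC₁0 : 0 ≤ C₁ := by
    have h2 := hC₁ t htmem 0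
    have h4 : (0:ℝ) ≤ C₁ / (1 + ‖(0 : EuclideanSpace ℝ (Fin n))‖) ^ (n+1) :=
      le_trans (by positivity) h2
    simpa using h4
  -- bounds on φ and derivatives on the compact range
  obtain ⟨M₀, hM₀⟩ := (isCompact_Icc : IsCompact (Set.Icc (-C₀) C₀)).exists_bound_of_continuousOn
    hφ.continuous.continuousOn
  obtain ⟨M₁, hM₁⟩ := (isCompact_Icc : IsCompact (Set.Icc (-C₀) C₀)).exists_bound_of_continuousOn
    (phi_C1' hφ).continuous.continuousOn
  obtain ⟨M₂, hM₂⟩ := (isCompact_Icc : IsCompact (Set.Icc (-C₀) C₀)).exists_bound_of_continuousOn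
    (phi_C2 hφ).continuousOn
  have hmem0 : (0:ℝ) ∈ Set.Icc (-C₀) C₀ := ⟨by linarith, hC₀0⟩
  have hM₀0 : 0 ≤ M₀ := le_trans (norm_nonneg _) (hM₀ 0 hmem0)
  have hM₁0 : 0 ≤ M₁ := le_trans (norm_nonneg _) (hM₁ 0 hmem0)
  have hM₂0 : 0 ≤ M₂ := le_trans (norm_nonneg _) (hM₂ 0 hmem0)
  have hmem : ∀ s ∈ Set.Icc (0:ℝ) (2*t), ∀ x, h s x ∈ Set.Icc (-C₀) C₀ := by
    intro s hs x
    have := abs_le.mp (habs_h s hs x)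
    exact ⟨this.1, this.2⟩
  have habs_φ : ∀ s ∈ Set.Icc (0:ℝ) (2*t), ∀ x, |φ (h s x)| ≤ M₀ := by
    intro s hs x
    have := hM₀ _ (hmem s hs x); rwa [Real.norm_eq_abs] at this
  have habs_φ' : ∀ s ∈ Set.Icc (0:ℝ) (2*t), ∀ x, |deriv φ (h s x)| ≤ M₁ := by
    intro s hs x
    have := hM₁ _ (hmem s hs x); rwa [Real.norm_eq_abs] at this
  have habs_φ'' : ∀ s ∈ Set.Icc (0:ℝ) (2*t), ∀ x, |deriv (deriv φ) (h s x)| ≤ M₂ := by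
    intro s hs x
    have := hM₂ _ (hmem s hs x); rwa [Real.norm_eq_abs] at this
  -- smoothness of slices
  have hhsE : ∀ s : ℝ, 0 ≤ s → ContDiff ℝ (⊤ : ℕ∞) (h s) := fun s hs => slice_contDiff hsmooth hs
  have hhtE : ContDiff ℝ (⊤ : ℕ∞) (h t) := hhsE t ht.le
  have hcont_d1 : ∀ i : Fin n, Continuous (pd i (h t)) := fun i => (pd_contDiff i hhtE).continuous
  have hcont_d2 : ∀ i j : Fin n, Continuous (pd i (pd j (h t))) :=
    fun i j => (pd_contDiff i (pd_contDiff j hhtE)).continuous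
  have hcontV : Continuous V := hV.continuous
  have hcont_pdV : ∀ i : Fin n, Continuous (pd i V) := fun i => (pd_contDiff i hV).continuous
  have hcont_exp : Continuous (fun x : EuclideanSpace ℝ (Fin n) => Real.exp (-V x)) :=
    Real.continuous_exp.comp hcontV.neg
  have hcont_φ'h : Continuous (fun x => deriv φ (h t x)) :=
    (phi_C1' hφ).continuous.comp hhtE.continuous
  have hcont_φ''h : Continuous (fun x => deriv (deriv φ) (h t x)) :=
    (phi_C2 hφ).comp hhtE.continuous
  have hpdV_le : ∀ (i : Fin n) x, |pd i V x| ≤ ‖fderiv ℝ V x‖ := by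
    intro i x
    have h1 := (fderiv ℝ V x).le_opNorm (EuclideanSpace.single i (1:ℝ))
    rw [EuclideanSpace.norm_single] at h1
    simpa [pd] using h1
  -- the weight function G and its derivative
  set G : EuclideanSpace ℝ (Fin n) → ℝ := fun x => deriv φ (h t x) * Real.exp (-V x) with hGdef
  have hcontG : Continuous G := hcont_φ'h.mul hcont_exp
  have hGfd : ∀ x, HasFDerivAt G
      (deriv φ (h t x) • (Real.exp (-V x) • (-(fderiv ℝ V x))) +
        Real.exp (-V x) • ((deriv (deriv φ) (h t x)) • fderiv ℝ (h t) x)) x := by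
    intro x
    have hc : HasFDerivAt (fun y => deriv φ (h t y))
        ((deriv (deriv φ) (h t x)) • fderiv ℝ (h t) x) x :=
      ((phi_D2 hφ) (h t x)).hasDerivAt.comp_hasFDerivAt x
        ((hhtE.differentiable (by simp) x).hasFDerivAt)
    have hd : HasFDerivAt (fun y => Real.exp (-V y)) (Real.exp (-V x) • (-(fderiv ℝ V x))) x :=
      by have := (Real.hasDerivAt_exp (-V x)).comp_hasFDerivAt x
            ((hV.differentiable (by simp) x).hasFDerivAt.neg)
         exact this
    exact hc.mul hd
  have hGdiff : Differentiable ℝ G := fun x => (hGfd x).differentiableAt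
  have hGder : ∀ (i : Fin n) x, fderiv ℝ G x (EuclideanSpace.single i (1:ℝ)) =
      deriv (deriv φ) (h t x) * pd i (h t) x * Real.exp (-V x)
        - deriv φ (h t x) * Real.exp (-V x) * pd i V x := by
    intro i x
    rw [(hGfd x).fderiv]
    simp only [ContinuousLinearMap.add_apply, ContinuousLinearMap.smul_apply,
      ContinuousLinearMap.neg_apply, smul_eq_mul, pd]
    ring
  -- integrability facts
  have habs_G : ∀ x, |G x| ≤ M₁ * Real.exp (-V x) := by
    intro x
    rw [hGdef]
    simp only [abs_mul, abs_of_pos (Real.exp_pos (-V x))]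
    exact mul_le_mul_of_nonneg_right (habs_φ' t htmem x) (Real.exp_pos _).le
  have hint_Gdd : ∀ i j : Fin n, Integrable (fun x => G x * pd i (pd j (h t)) x) := by
    intro i j
    apply integrable_dom hVint (M₁ * C₀) 0 (hcontG.mul (hcont_d2 i j))
    intro x
    have e0 : (0:ℝ) < Real.exp (-V x) := Real.exp_pos _
    have h1 : |G x * pd i (pd j (h t)) x| ≤ (M₁ * Real.exp (-V x)) * C₀ := by
      rw [abs_mul]
      exact mul_le_mul (habs_G x) (habs_d2 t htmem i j x) (abs_nonneg _)
        (by positivity)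
    calc |G x * pd i (pd j (h t)) x| ≤ (M₁ * Real.exp (-V x)) * C₀ := h1
      _ = M₁ * C₀ * Real.exp (-V x) + 0 * (1 / (1 + ‖x‖) ^ (n+1)) := by ring
  have hint_Gd : ∀ i : Fin n, Integrable (fun x => G x * pd i (h t) x) := by
    intro i
    apply integrable_dom hVint (M₁ * C₀) 0 (hcontG.mul (hcont_d1 i))
    intro x
    have h1 : |G x * pd i (h t) x| ≤ (M₁ * Real.exp (-V x)) * C₀ := by
      rw [abs_mul]
      exact mul_le_mul (habs_G x) (habs_d1 t htmem i x) (abs_nonneg _) (by positivity)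
    calc |G x * pd i (h t) x| ≤ (M₁ * Real.exp (-V x)) * C₀ := h1
      _ = M₁ * C₀ * Real.exp (-V x) + 0 * (1 / (1 + ‖x‖) ^ (n+1)) := by ring
  have hint_P : ∀ i : Fin n, Integrable
      (fun x => deriv (deriv φ) (h t x) * pd i (h t) x ^ 2 * Real.exp (-V x)) := by
    intro i
    apply integrable_dom hVint (M₂ * (C₀ * C₀)) 0
      ((hcont_φ''h.mul ((hcont_d1 i).pow 2)).mul hcont_exp)
    intro x
    have e0 : (0:ℝ) < Real.exp (-V x) := Real.exp_pos _
    have h1 : |deriv (deriv φ) (h t x) * pd i (h t) x ^ 2 * Real.exp (-V x)|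
        = |deriv (deriv φ) (h t x)| * |pd i (h t) x| ^ 2 * Real.exp (-V x) := by
      rw [abs_mul, abs_mul, abs_of_pos e0, abs_pow]
    simp only [Pi.mul_apply, Pi.pow_apply]
    rw [h1]
    have h2 : |deriv (deriv φ) (h t x)| * |pd i (h t) x| ^ 2 ≤ M₂ * (C₀ * C₀) := by
      have ha := habs_d1 t htmem i x
      have hb := habs_φ'' t htmem x
      have hd2 : |pd i (h t) x| ^ 2 ≤ C₀ * C₀ := by
        nlinarith [abs_nonneg (pd i (h t) x)]
      exact mul_le_mul hb hd2 (by positivity) hM₂0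
    calc |deriv (deriv φ) (h t x)| * |pd i (h t) x| ^ 2 * Real.exp (-V x)
        ≤ M₂ * (C₀ * C₀) * Real.exp (-V x) := mul_le_mul_of_nonneg_right h2 e0.le
      _ = M₂ * (C₀ * C₀) * Real.exp (-V x) + 0 * (1 / (1 + ‖x‖) ^ (n+1)) := by ring
  have hint_Q : ∀ i : Fin n, Integrable (fun x => G x * (pd i V x * pd i (h t) x)) := by
    intro i
    apply integrable_dom hVint 0 (M₁ * Cg * C₁)
      (hcontG.mul ((hcont_pdV i).mul (hcont_d1 i)))
    intro x
    have e0 : (0:ℝ) < Real.exp (-V x) := Real.exp_pos _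
    have h1 : |G x * (pd i V x * pd i (h t) x)|
        = (|deriv φ (h t x)|) * ((|pd i V x|) * Real.exp (-V x)) * |pd i (h t) x| := by
      rw [hGdef]
      simp only [abs_mul, abs_of_pos e0]
      ring
    simp only [Pi.mul_apply]
    rw [h1]
    have h2 : |pd i V x| * Real.exp (-V x) ≤ Cg :=
      le_trans (mul_le_mul_of_nonneg_right (hpdV_le i x) e0.le) (hCg x)
    have h3 : |deriv φ (h t x)| * (|pd i V x| * Real.exp (-V x)) * |pd i (h t) x|
        ≤ M₁ * Cg * (C₁ * (1 / (1 + ‖x‖) ^ (n+1))) := by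
      apply mul_le_mul
      · exact mul_le_mul (habs_φ' t htmem x) h2 (by positivity) hM₁0
      · exact habs_d1' t htmem i x
      · exact abs_nonneg _
      · exact mul_nonneg hM₁0 hCg0
    calc |deriv φ (h t x)| * (|pd i V x| * Real.exp (-V x)) * |pd i (h t) x|
        ≤ M₁ * Cg * (C₁ * (1 / (1 + ‖x‖) ^ (n+1))) := h3
      _ = 0 * Real.exp (-V x) + M₁ * Cg * C₁ * (1 / (1 + ‖x‖) ^ (n+1)) := by ring
  have hint_A : ∀ i : Fin n, Integrable
      (fun x => (deriv (deriv φ) (h t x) * pd i (h t) x * Real.exp (-V x)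
        - deriv φ (h t x) * Real.exp (-V x) * pd i V x) * pd i (h t) x) := by
    intro i
    have heq : ∀ x, (deriv (deriv φ) (h t x) * pd i (h t) x * Real.exp (-V x)
        - deriv φ (h t x) * Real.exp (-V x) * pd i V x) * pd i (h t) x
        = deriv (deriv φ) (h t x) * pd i (h t) x ^ 2 * Real.exp (-V x)
          - G x * (pd i V x * pd i (h t) x) := by
      intro x; rw [hGdef]; ring
    have := (hint_P i).sub (hint_Q i)
    exact this.congr (Filter.Eventually.of_forall fun x => (heq x).symm)
  -- integration by parts in direction i
  have hibp : ∀ i : Fin n, ∫ x, G x * pd i (pd i (h t)) x =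
      -∫ x, (deriv (deriv φ) (h t x) * pd i (h t) x * Real.exp (-V x)
        - deriv φ (h t x) * Real.exp (-V x) * pd i V x) * pd i (h t) x := by
    intro i
    have hf'g : Integrable (fun x =>
        fderiv ℝ G x (EuclideanSpace.single i (1:ℝ)) * pd i (h t) x) volume :=
      (hint_A i).congr (Filter.Eventually.of_forall fun x => by simp only [hGder i x])
    have hfg' : Integrable (fun x =>
        G x * fderiv ℝ (pd i (h t)) x (EuclideanSpace.single i (1:ℝ))) volume := hint_Gdd i i
    have h1 := integral_mul_fderiv_eq_neg_fderiv_mul_of_integrable (μ := volume)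
      (f := G) (g := pd i (h t)) (v := EuclideanSpace.single i (1:ℝ))
      hf'g hfg' (hint_Gd i) (fun x _ => hGdiff x)
      (fun x _ => (pd_contDiff i hhtE).differentiable (by simp) x)
    calc ∫ x, G x * pd i (pd i (h t)) x
        = ∫ x, G x * fderiv ℝ (pd i (h t)) x (EuclideanSpace.single i (1:ℝ)) := rfl
      _ = -∫ x, fderiv ℝ G x (EuclideanSpace.single i (1:ℝ)) * pd i (h t) x := h1
      _ = -∫ x, (deriv (deriv φ) (h t x) * pd i (h t) x * Real.exp (-V x)
            - deriv φ (h t x) * Real.exp (-V x) * pd i V x) * pd i (h t) x := by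
          congr 1
          exact integral_congr_ae (Filter.Eventually.of_forall fun x => by simp only [hGder i x])
  -- split the right side of the IBP identity
  have hsplitA : ∀ i : Fin n,
      ∫ x, (deriv (deriv φ) (h t x) * pd i (h t) x * Real.exp (-V x)
        - deriv φ (h t x) * Real.exp (-V x) * pd i V x) * pd i (h t) x
      = (∫ x, deriv (deriv φ) (h t x) * pd i (h t) x ^ 2 * Real.exp (-V x))
        - ∫ x, G x * (pd i V x * pd i (h t) x) := by
    intro i
    rw [← integral_sub (hint_P i) (hint_Q i)]
    apply integral_congr_ae
    filter_upwards with x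
    rw [hGdef]
    ring
  -- the key identity
  have hkey : ∫ x, deriv φ (h t x) * (lap (h t) x - ∑ i, pd i V x * pd i (h t) x)
        * Real.exp (-V x)
      = -∫ x, deriv (deriv φ) (h t x) * (∑ i, pd i (h t) x ^ 2) * Real.exp (-V x) := by
    have hLHS : ∫ x, deriv φ (h t x) * (lap (h t) x - ∑ i, pd i V x * pd i (h t) x)
          * Real.exp (-V x)
        = (∑ i, ∫ x, G x * pd i (pd i (h t)) x)
          - ∑ i, ∫ x, G x * (pd i V x * pd i (h t) x) := by
      rw [← integral_finset_sum _ (fun i _ => hint_Gdd i i),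
        ← integral_finset_sum _ (fun i _ => hint_Q i),
        ← integral_sub (integrable_finset_sum _ (fun i _ => hint_Gdd i i))
          (integrable_finset_sum _ (fun i _ => hint_Q i))]
      apply integral_congr_ae
      filter_upwards with x
      rw [hGdef]
      simp only [lap, ← Finset.mul_sum]
      ring
    have hRHS : ∫ x, deriv (deriv φ) (h t x) * (∑ i, pd i (h t) x ^ 2) * Real.exp (-V x)
        = ∑ i, ∫ x, deriv (deriv φ) (h t x) * pd i (h t) x ^ 2 * Real.exp (-V x) := by
      rw [← integral_finset_sum _ (fun i _ => hint_P i)]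
      apply integral_congr_ae
      filter_upwards with x
      rw [Finset.mul_sum, Finset.sum_mul]
    rw [hLHS, hRHS]
    have : ∀ i : Fin n, ∫ x, G x * pd i (pd i (h t)) x
        = -((∫ x, deriv (deriv φ) (h t x) * pd i (h t) x ^ 2 * Real.exp (-V x))
            - ∫ x, G x * (pd i V x * pd i (h t) x)) := by
      intro i
      rw [hibp i, hsplitA i]
    rw [Finset.sum_congr rfl (fun i _ => this i)]
    rw [Finset.sum_neg_distrib, Finset.sum_sub_distrib]
    ring
  -- lap bound
  have habs_lap : ∀ s ∈ Set.Icc (0:ℝ) (2*t), ∀ x, |lap (h s) x| ≤ C₀ := by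
    intro s hs x
    have h1 : |lap (h s) x| ≤ ∑ i, |pd i (pd i (h s)) x| := Finset.abs_sum_le_sum_abs _ _
    have h2 : (∑ i, |pd i (pd i (h s)) x|) ≤ ∑ i, ∑ j, |pd i (pd j (h s)) x| :=
      Finset.sum_le_sum fun i _ =>
        Finset.single_le_sum (f := fun j => |pd i (pd j (h s)) x|)
          (fun j _ => abs_nonneg _) (Finset.mem_univ i)
    have := hC₀' s hs x
    linarith [abs_nonneg (h s x), sum1_nonneg s x]
  -- differentiation under the integral sign
  have hmain := hasDerivAt_integral_of_dominated_loc_of_deriv_le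
    (μ := (volume : Measure (EuclideanSpace ℝ (Fin n))))
    (F := fun s x => φ (h s x) * Real.exp (-V x))
    (F' := fun s x => deriv φ (h s x) * (lap (h s) x - ∑ i, pd i V x * pd i (h s) x)
      * Real.exp (-V x))
    (x₀ := t)
    (bound := fun x => M₁ * C₀ * Real.exp (-V x)
      + M₁ * (n * (Cg * C₁)) * (1 / (1 + ‖x‖) ^ (n+1)))
    (Metric.ball_mem_nhds t (half_pos ht)) ?_ ?_ ?_ ?_ ?_ ?_
  · exact hmain.2.congr_deriv (by rw [hkey])
  · -- measurability of F s for s near t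
    filter_upwards [Metric.ball_mem_nhds t (half_pos ht)] with s hs
    have hs0 : (0:ℝ) ≤ s := by
      have := Metric.mem_ball.mp hs
      rw [Real.dist_eq, abs_lt] at this
      linarith
    exact ((hφ.continuous.comp (hhsE s hs0).continuous).mul hcont_exp).aestronglyMeasurable
  · -- integrability of F t
    apply integrable_dom hVint M₀ 0 ((hφ.continuous.comp hhtE.continuous).mul hcont_exp)
    intro x
    have e0 : (0:ℝ) < Real.exp (-V x) := Real.exp_pos _
    calc |φ (h t x) * Real.exp (-V x)| = |φ (h t x)| * Real.exp (-V x) := by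
          rw [abs_mul, abs_of_pos e0]
      _ ≤ M₀ * Real.exp (-V x) := mul_le_mul_of_nonneg_right (habs_φ t htmem x) e0.le
      _ = M₀ * Real.exp (-V x) + 0 * (1 / (1 + ‖x‖) ^ (n+1)) := by ring
  · -- measurability of F' t
    have hcont_lap : Continuous (lap (h t)) := by
      apply continuous_finset_sum
      intro i _
      exact hcont_d2 i i
    have : Continuous (fun x => deriv φ (h t x)
        * (lap (h t) x - ∑ i, pd i V x * pd i (h t) x) * Real.exp (-V x)) := by
      apply Continuous.mul
      · apply Continuous.mul hcont_φ'h
        apply Continuous.sub hcont_lap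
        exact continuous_finset_sum _ fun i _ => (hcont_pdV i).mul (hcont_d1 i)
      · exact hcont_exp
    exact this.aestronglyMeasurable
  · -- uniform bound
    filter_upwards with x
    intro s hs
    have hsIcc : s ∈ Set.Icc (0:ℝ) (2*t) := by
      have := Metric.mem_ball.mp hs
      rw [Real.dist_eq, abs_lt] at this
      constructor <;> [linarith; linarith]
    have e0 : (0:ℝ) < Real.exp (-V x) := Real.exp_pos _
    have hq0 : (0:ℝ) < 1 / (1 + ‖x‖) ^ (n+1) := by positivity
    have hS : |∑ i, pd i V x * pd i (h s) x|
        ≤ n * (‖fderiv ℝ V x‖ * (C₁ * (1 / (1 + ‖x‖) ^ (n+1)))) := by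
      calc |∑ i, pd i V x * pd i (h s) x| ≤ ∑ i, |pd i V x * pd i (h s) x| :=
            Finset.abs_sum_le_sum_abs _ _
        _ ≤ ∑ _i : Fin n, ‖fderiv ℝ V x‖ * (C₁ * (1 / (1 + ‖x‖) ^ (n+1))) := by
            apply Finset.sum_le_sum
            intro i _
            rw [abs_mul]
            exact mul_le_mul (hpdV_le i x) (habs_d1' s hsIcc i x) (abs_nonneg _)
              (norm_nonneg _)
        _ = n * (‖fderiv ℝ V x‖ * (C₁ * (1 / (1 + ‖x‖) ^ (n+1)))) := by
            rw [Finset.sum_const, Finset.card_univ, Fintype.card_fin, nsmul_eq_mul]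
    have hL := habs_lap s hsIcc x
    have hφ's := habs_φ' s hsIcc x
    have key : |deriv φ (h s x) * (lap (h s) x - ∑ i, pd i V x * pd i (h s) x)
        * Real.exp (-V x)|
        = |deriv φ (h s x)| * |lap (h s) x - ∑ i, pd i V x * pd i (h s) x|
          * Real.exp (-V x) := by
      rw [abs_mul, abs_mul, abs_of_pos e0]
    rw [Real.norm_eq_abs, key]
    have htri : |lap (h s) x - ∑ i, pd i V x * pd i (h s) x|
        ≤ C₀ + n * (‖fderiv ℝ V x‖ * (C₁ * (1 / (1 + ‖x‖) ^ (n+1)))) := by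
      calc |lap (h s) x - ∑ i, pd i V x * pd i (h s) x|
          ≤ |lap (h s) x| + |∑ i, pd i V x * pd i (h s) x| := abs_sub _ _
        _ ≤ C₀ + n * (‖fderiv ℝ V x‖ * (C₁ * (1 / (1 + ‖x‖) ^ (n+1)))) := add_le_add hL hS
    have hVe : ‖fderiv ℝ V x‖ * Real.exp (-V x) ≤ Cg := hCg x
    have h5 : |deriv φ (h s x)| * |lap (h s) x - ∑ i, pd i V x * pd i (h s) x|
          * Real.exp (-V x)
        ≤ M₁ * (C₀ + n * (‖fderiv ℝ V x‖ * (C₁ * (1 / (1 + ‖x‖) ^ (n+1)))))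
          * Real.exp (-V x) := by
      apply mul_le_mul_of_nonneg_right _ e0.le
      exact mul_le_mul hφ's htri (abs_nonneg _) hM₁0
    refine le_trans h5 ?_
    have h6 : (0:ℝ) ≤ (n : ℝ) * C₁ * (1 / (1 + ‖x‖) ^ (n+1)) := by positivity
    have h7 : (n:ℝ) * (‖fderiv ℝ V x‖ * (C₁ * (1 / (1 + ‖x‖) ^ (n+1)))) * Real.exp (-V x)
        ≤ (n:ℝ) * (Cg * (C₁ * (1 / (1 + ‖x‖) ^ (n+1)))) := by
      have : (n:ℝ) * (‖fderiv ℝ V x‖ * (C₁ * (1 / (1 + ‖x‖) ^ (n+1)))) * Real.exp (-V x)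
          = (‖fderiv ℝ V x‖ * Real.exp (-V x)) * ((n:ℝ) * C₁ * (1 / (1 + ‖x‖) ^ (n+1))) := by
        ring
      rw [this]
      have := mul_le_mul_of_nonneg_right hVe h6
      calc (‖fderiv ℝ V x‖ * Real.exp (-V x)) * ((n:ℝ) * C₁ * (1 / (1 + ‖x‖) ^ (n+1)))
          ≤ Cg * ((n:ℝ) * C₁ * (1 / (1 + ‖x‖) ^ (n+1))) := this
        _ = (n:ℝ) * (Cg * (C₁ * (1 / (1 + ‖x‖) ^ (n+1)))) := by ring
    nlinarith [mul_le_mul_of_nonneg_left h7 hM₁0, e0.le]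
  · -- integrability of the bound
    exact (hVint.const_mul _).add (japanese.const_mul _)
  · -- differentiability in s
    filter_upwards with x
    intro s hs
    have hs0 : (0:ℝ) < s := by
      have := Metric.mem_ball.mp hs
      rw [Real.dist_eq, abs_lt] at this
      linarith
    have hh : HasDerivAt (fun u => h u x) (deriv (fun u => h u x) s) s :=
      (time_diffAt hsmooth hs0 x).hasDerivAt
    have hφat : HasDerivAt φ (deriv φ (h s x)) (h s x) := ((phi_D1 hφ) (h s x)).hasDerivAt
    have hcomp : HasDerivAt (fun u => φ (h u x))
        (deriv φ (h s x) * deriv (fun u => h u x) s) s := by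
      have := HasDerivAt.comp s hφat hh
      exact this
    have hfin := hcomp.mul_const (Real.exp (-V x))
    rw [hpde s hs0 x] at hfin
    exact hfin


/-- For the Fokker–Planck equation in the form `∂h/∂t = Δh − ∇V·∇h` (obtained from
`∂ρ/∂t = ∇·(∇ρ + ρ∇V)` via `ρ = h e^{−V}`), and any `C²` convex `φ`, the functional
`∫ φ(h(t,·)) e^{−V}` satisfies
`d/dt ∫ φ(h) e^{−V} = −∫ φ''(h) |∇h|² e^{−V} ≤ 0` for `t > 0`;
in particular it is a Lyapunov functional (nonincreasing in time). -/
theorem fokkerPlanck_lyapunov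
    (n : ℕ) (hn : 1 ≤ n)
    (V : EuclideanSpace ℝ (Fin n) → ℝ)
    (hV : ContDiff ℝ (⊤ : ℕ∞) V)
    (hVint : Integrable (fun x : EuclideanSpace ℝ (Fin n) => Real.exp (-V x)))
    (hVbdd : ∃ C : ℝ, ∀ x, Real.exp (-V x) ≤ C)
    (hgradVbdd : ∃ C : ℝ, ∀ x, ‖fderiv ℝ V x‖ * Real.exp (-V x) ≤ C)
    (φ : ℝ → ℝ) (hφ : ContDiff ℝ 2 φ) (hφconv : ConvexOn ℝ Set.univ φ)
    (h : ℝ → EuclideanSpace ℝ (Fin n) → ℝ)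
    (hsmooth : ContDiffOn ℝ (⊤ : ℕ∞) (fun p : ℝ × EuclideanSpace ℝ (Fin n) => h p.1 p.2)
      {p : ℝ × EuclideanSpace ℝ (Fin n) | 0 ≤ p.1})
    (hdecay : ∀ b : ℝ, 0 ≤ b → ∀ k : ℕ, ∃ C : ℝ,
      ∀ t ∈ Set.Icc (0 : ℝ) b, ∀ x : EuclideanSpace ℝ (Fin n),
        |h t x| + (∑ i, |pd i (h t) x|) + (∑ i, ∑ j, |pd i (pd j (h t)) x|) ≤
          C / (1 + ‖x‖) ^ k)
    (hpde : ∀ t : ℝ, 0 < t → ∀ x,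
      deriv (fun s => h s x) t = lap (h t) x - ∑ i, pd i V x * pd i (h t) x) :
    (∀ t : ℝ, 0 < t →
      deriv (fun s => ∫ x : EuclideanSpace ℝ (Fin n), φ (h s x) * Real.exp (-V x)) t =
        -∫ x : EuclideanSpace ℝ (Fin n),
          deriv (deriv φ) (h t x) * (∑ i, (pd i (h t) x) ^ 2) * Real.exp (-V x) ∧
      deriv (fun s => ∫ x : EuclideanSpace ℝ (Fin n), φ (h s x) * Real.exp (-V x)) t ≤ 0) ∧
    AntitoneOn (fun t => ∫ x : EuclideanSpace ℝ (Fin n), φ (h t x) * Real.exp (-V x))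
      (Set.Ici (0 : ℝ)) := by
  have hnonneg : ∀ t : ℝ, (0:ℝ) ≤ ∫ x : EuclideanSpace ℝ (Fin n),
      deriv (deriv φ) (h t x) * (∑ i, (pd i (h t) x) ^ 2) * Real.exp (-V x) := by
    intro t
    apply integral_nonneg
    intro x
    apply mul_nonneg (mul_nonneg (phi_dd_nonneg hφ hφconv _) _) (Real.exp_pos _).le
    exact Finset.sum_nonneg fun i _ => sq_nonneg _
  constructor
  · intro t ht
    have hcore := core hV hVint hgradVbdd hφ hsmooth hdecay hpde ht
    refine ⟨hcore.deriv, ?_⟩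
    rw [hcore.deriv]
    exact neg_nonpos.mpr (hnonneg t)
  · apply antitoneOn_of_deriv_nonpos (convex_Ici 0)
    · -- continuity on [0, ∞)
      intro t₀ ht₀
      have ht₀' : (0:ℝ) ≤ t₀ := ht₀
      obtain ⟨C₀, hC₀⟩ := hdecay (t₀ + 1) (by linarith) 0
      have hC₀' : ∀ s ∈ Set.Icc (0:ℝ) (t₀+1), ∀ x, |h s x| ≤ C₀ := by
        intro s hs x
        have h1 := hC₀ s hs x
        simp only [pow_zero, div_one] at h1
        have h2 : (0:ℝ) ≤ ∑ i, |pd i (h s) x| :=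
          Finset.sum_nonneg fun i _ => abs_nonneg _
        have h3 : (0:ℝ) ≤ ∑ i, ∑ j, |pd i (pd j (h s)) x| :=
          Finset.sum_nonneg fun i _ => Finset.sum_nonneg fun j _ => abs_nonneg _
        linarith
      obtain ⟨M₀, hM₀⟩ :=
        (isCompact_Icc : IsCompact (Set.Icc (-C₀) C₀)).exists_bound_of_continuousOn
          hφ.continuous.continuousOn
      have habs_φ : ∀ s ∈ Set.Icc (0:ℝ) (t₀+1), ∀ x, |φ (h s x)| ≤ M₀ := by
        intro s hs x
        have hmem : h s x ∈ Set.Icc (-C₀) C₀ := by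
          have := abs_le.mp (hC₀' s hs x); exact ⟨this.1, this.2⟩
        have := hM₀ _ hmem; rwa [Real.norm_eq_abs] at this
      have hIccmem : Set.Icc (0:ℝ) (t₀+1) ∈ nhdsWithin t₀ (Set.Ici (0:ℝ)) := by
        have h1 : Set.Ioo (t₀-1) (t₀+1) ∈ nhds t₀ := Ioo_mem_nhds (by linarith) (by linarith)
        have h2 : Set.Ici (0:ℝ) ∩ Set.Ioo (t₀-1) (t₀+1) ⊆ Set.Icc 0 (t₀+1) := by
          rintro s ⟨hs1, hs2, hs3⟩
          exact ⟨hs1, hs3.le⟩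
        exact Filter.mem_of_superset (Filter.inter_mem self_mem_nhdsWithin
          (nhdsWithin_le_nhds h1)) h2
      apply MeasureTheory.continuousWithinAt_of_dominated
        (bound := fun x => M₀ * Real.exp (-V x))
      · filter_upwards [hIccmem] with s hs
        exact ((hφ.continuous.comp (slice_contDiff hsmooth hs.1).continuous).mul
          (Real.continuous_exp.comp hV.continuous.neg)).aestronglyMeasurable
      · filter_upwards [hIccmem] with s hs
        filter_upwards with x
        have e0 : (0:ℝ) < Real.exp (-V x) := Real.exp_pos _
        rw [Real.norm_eq_abs, abs_mul, abs_of_pos e0]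
        exact mul_le_mul_of_nonneg_right (habs_φ s hs x) e0.le
      · exact hVint.const_mul M₀
      · filter_upwards with x
        have h1 : ContinuousWithinAt (fun s => φ (h s x)) (Set.Ici 0) t₀ :=
          (hφ.continuous.continuousAt).comp_continuousWithinAt
            (time_contWithin hsmooth ht₀' x)
        exact h1.mul continuousWithinAt_const
    · -- differentiability on the interior
      rw [interior_Ici]
      intro s hs
      exact (core hV hVint hgradVbdd hφ hsmooth hdecay hpde hs).differentiableAt.differentiableWithinAt
    · -- nonpositive derivative on the interior
      rw [interior_Ici]
      intro s hs
      rw [(core hV hVint hgradVbdd hφ hsmooth hdecay hpde hs).deriv]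
      exact neg_nonpos.mpr (hnonneg s)
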